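/- Let A, B be real numbers with A ≠ 0. If U ∈ ℝ⟦w⟧ is any formal power series satisfying U = (A + B·U²)·w, then U = Σ_{i=0}^∞ c_i A^{i+1} B^i w^{2i+1}; that is, the coefficient of w^{2i+1} in U equals c_i A^{i+1} B^i for every i ≥ 0, and every even-degree coefficient of U is zero. In particular the formal power series solution of u = (A + Bu²)w is unique. -/

import Mathlib

/-- For real `A ≠ 0` and `B`, any formal power series `U ∈ ℝ⟦w⟧`
satisfying `U = (A + B·U²)·w` has coefficient of `w^{2i+1}` equal to
`c_i A^{i+1} B^i` for every `i`, and all even-degree coefficients zero;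
in particular the formal power series solution is unique. -/
theorem catalan_powerSeries_solution_unique (A B : ℝ) (hA : A ≠ 0)
    (U : PowerSeries ℝ)
    (hU : U = (PowerSeries.C A + PowerSeries.C B * U ^ 2) * PowerSeries.X) :
    (∀ i : ℕ, PowerSeries.coeff (2 * i + 1) U =
        (catalan i : ℝ) * A ^ (i + 1) * B ^ i) ∧
    (∀ i : ℕ, PowerSeries.coeff (2 * i) U = 0) := by
  set a : ℕ → ℝ := fun n => PowerSeries.coeff n U with ha
  have h0 : a 0 = 0 := by
    simp only [ha]
    conv_lhs => rw [hU]
    simp [PowerSeries.coeff_zero_eq_constantCoeff]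
  have hrec : ∀ n : ℕ, a (n + 1) =
      (if n = 0 then A else 0) + B * ∑ p ∈ Finset.HasAntidiagonal.antidiagonal n, a p.1 * a p.2 := by
    intro n
    have h1 : a (n + 1) =
        PowerSeries.coeff n (PowerSeries.C A + PowerSeries.C B * U ^ 2) := by
      simp only [ha]
      conv_lhs => rw [hU]
      rw [PowerSeries.coeff_succ_mul_X]
    rw [h1, map_add, PowerSeries.coeff_C, PowerSeries.coeff_C_mul, sq,
      PowerSeries.coeff_mul, Finset.mul_sum]
  have key : ∀ n : ℕ, (∀ i, n = 2 * i + 1 → a n = (catalan i : ℝ) * A ^ (i + 1) * B ^ i) ∧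
      (∀ i, n = 2 * i → a n = 0) := by
    intro n
    induction n using Nat.strong_induction_on with
    | _ n ih =>
      constructor
      · rintro i rfl
        cases i with
        | zero => simp [hrec, h0]
        | succ k =>
          have hn : 2 * (k + 1) + 1 = (2 * k + 2) + 1 := by ring
          rw [hn, hrec, if_neg (by omega), zero_add]
          have hsum : ∑ p ∈ Finset.HasAntidiagonal.antidiagonal (2 * k + 2), a p.1 * a p.2 =
              ∑ q ∈ Finset.HasAntidiagonal.antidiagonal k, a (2 * q.1 + 1) * a (2 * q.2 + 1) := by
            rw [← Finset.sum_filter_of_ne (p := fun p : ℕ × ℕ => Odd p.1)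
              (by
                intro p hp hne
                by_contra hodd
                rw [Nat.not_odd_iff_even] at hodd
                obtain ⟨m, hm⟩ := hodd
                have hp1 : p.1 = 2 * m := by omega
                have hlt : p.1 < 2 * (k + 1) + 1 := by
                  have := Finset.HasAntidiagonal.antidiagonal.fst_le hp
                  omega
                exact hne (by rw [hp1, (ih (2 * m) (by omega)).2 m rfl, zero_mul]))]
            refine (Finset.sum_nbij' (fun q : ℕ × ℕ => (2 * q.1 + 1, 2 * q.2 + 1))
              (fun p : ℕ × ℕ => (p.1 / 2, p.2 / 2)) ?_ ?_ ?_ ?_ ?_).symm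
            · intro q hq
              simp only [Finset.HasAntidiagonal.mem_antidiagonal] at hq
              simp only [Finset.mem_filter, Finset.HasAntidiagonal.mem_antidiagonal]
              exact ⟨by omega, ⟨q.1, by omega⟩⟩
            · intro p hp
              simp only [Finset.mem_filter, Finset.HasAntidiagonal.mem_antidiagonal] at hp
              simp only [Finset.HasAntidiagonal.mem_antidiagonal]
              obtain ⟨m, hm⟩ := hp.2
              have hp2 : Odd p.2 := by
                rcases Nat.even_or_odd p.2 with ⟨l, hl⟩ | ho
                · omega
                · exact ho
              obtain ⟨l, hl⟩ := hp2
              omega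
            · intro q hq
              ext <;> simp <;> omega
            · intro p hp
              simp only [Finset.mem_filter, Finset.HasAntidiagonal.mem_antidiagonal] at hp
              obtain ⟨m, hm⟩ := hp.2
              have hp2 : Odd p.2 := by
                rcases Nat.even_or_odd p.2 with ⟨l, hl⟩ | ho
                · omega
                · exact ho
              obtain ⟨l, hl⟩ := hp2
              ext <;> simp <;> omega
            · intro q hq
              rfl
          rw [hsum]
          have hterm : ∀ q ∈ Finset.HasAntidiagonal.antidiagonal k, a (2 * q.1 + 1) * a (2 * q.2 + 1) =
              ((catalan q.1 : ℝ) * (catalan q.2 : ℝ)) * (A ^ (k + 2) * B ^ k) := by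
            intro q hq
            rw [Finset.HasAntidiagonal.mem_antidiagonal] at hq
            rw [(ih (2 * q.1 + 1) (by omega)).1 q.1 rfl,
              (ih (2 * q.2 + 1) (by omega)).1 q.2 rfl]
            have e1 : A ^ (q.1 + 1) * A ^ (q.2 + 1) = A ^ (k + 2) := by
              rw [← pow_add]; congr 1; omega
            have e2 : B ^ q.1 * B ^ q.2 = B ^ k := by
              rw [← pow_add]; congr 1
            calc (catalan q.1 : ℝ) * A ^ (q.1 + 1) * B ^ q.1 *
                  ((catalan q.2 : ℝ) * A ^ (q.2 + 1) * B ^ q.2)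
                = (catalan q.1 : ℝ) * (catalan q.2 : ℝ) *
                  (A ^ (q.1 + 1) * A ^ (q.2 + 1)) * (B ^ q.1 * B ^ q.2) := by ring
              _ = _ := by rw [e1, e2]; ring
          rw [Finset.sum_congr rfl hterm, ← Finset.sum_mul]
          have hcat : ∑ q ∈ Finset.HasAntidiagonal.antidiagonal k, (catalan q.1 : ℝ) * (catalan q.2 : ℝ) =
              (catalan (k + 1) : ℝ) := by
            rw [catalan_succ']
            push_cast
            rfl
          rw [hcat]; ring
      · rintro i rfl
        cases i with
        | zero => exact h0
        | succ k =>
          have hn : 2 * (k + 1) = (2 * k + 1) + 1 := by ring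
          rw [hn, hrec, if_neg (by omega), zero_add]
          have : ∑ p ∈ Finset.HasAntidiagonal.antidiagonal (2 * k + 1), a p.1 * a p.2 = 0 := by
            refine Finset.sum_eq_zero fun p hp => ?_
            rw [Finset.HasAntidiagonal.mem_antidiagonal] at hp
            rcases Nat.even_or_odd p.1 with ⟨m, hm⟩ | ⟨m, hm⟩
            · rw [(ih p.1 (by omega)).2 m (by omega), zero_mul]
            · have : Even p.2 := by
                rcases Nat.even_or_odd p.2 with he | ⟨l, hl⟩
                · exact he
                · omega
              obtain ⟨l, hl⟩ := this
              rw [(ih p.2 (by omega)).2 l (by omega), mul_zero]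
          rw [this, mul_zero]
  exact ⟨fun i => (key (2 * i + 1)).1 i rfl, fun i => (key (2 * i)).2 i rfl⟩
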